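/- Let Δ > 0 and ε > 0, let ν = Lap(Δ/(2ε)) be the Laplace measure with scale Δ/(2ε), and for c ∈ ℝ let μ_c denote the pushforward of ν under the translation x ↦ x + c. Then for all a, a' ∈ ℝ with |a − a'| = Δ there exists a measurable set S ⊆ ℝ such that μ_a(S) > exp(ε) · μ_{a'}(S). In other words, the under-calibrated Laplace mechanism with noise scale Δ/(2ε) does not satisfy ε-differential privacy when the sensitivity Δ is attained. -/

import Mathlib

open MeasureTheory

/-- The Laplace measure `Lap(b)` on `ℝ`, with density `x ↦ (1/(2b))·exp(−|x|/b)`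
with respect to Lebesgue measure. -/
noncomputable def lapMeasure (b : ℝ) : Measure ℝ :=
  volume.withDensity fun x => ENNReal.ofReal (1 / (2 * b) * Real.exp (-|x| / b))

open Set Real in
lemma lap_exp_int (b t : ℝ) (hb : 0 < b) :
    ∫ x in Ioi t, Real.exp (-x / b) = b * Real.exp (-t / b) := by
  have h1 : (fun x : ℝ => Real.exp (-x / b)) = fun x => Real.exp (-(b⁻¹ * x)) := by
    funext x; rw [neg_div, div_eq_inv_mul]
  rw [h1, integral_comp_mul_left_Ioi (fun x => Real.exp (-x)) t (inv_pos.mpr hb),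
    integral_exp_neg_Ioi]
  rw [smul_eq_mul, inv_inv, neg_div, div_eq_inv_mul]

open Set Real in
lemma lap_exp_intOn (b t : ℝ) (hb : 0 < b) :
    IntegrableOn (fun x : ℝ => Real.exp (-x / b)) (Ioi t) := by
  have h1 : (fun x : ℝ => Real.exp (-x / b)) = fun x => Real.exp (-b⁻¹ * x) := by
    funext x; rw [neg_div, div_eq_inv_mul, neg_mul]
  rw [h1]; exact exp_neg_integrableOn_Ioi t (inv_pos.mpr hb)

open Set Real in
lemma lap_Ici (b t : ℝ) (hb : 0 < b) (ht : 0 ≤ t) :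
    lapMeasure b (Ici t) = ENNReal.ofReal (1 / 2 * Real.exp (-t / b)) := by
  rw [lapMeasure, withDensity_apply _ measurableSet_Ici,
    ← setLIntegral_congr Ioi_ae_eq_Ici]
  have h2 : ∀ x ∈ Ioi t, ENNReal.ofReal (1 / (2 * b) * Real.exp (-|x| / b))
      = ENNReal.ofReal (1 / (2 * b) * Real.exp (-x / b)) := by
    intro x hx
    rw [abs_of_nonneg (le_trans ht (le_of_lt hx))]
  rw [setLIntegral_congr_fun measurableSet_Ioi h2,
    ← ofReal_integral_eq_lintegral_ofReal]
  · rw [MeasureTheory.integral_const_mul, lap_exp_int b t hb]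
    congr 1
    field_simp
  · exact (lap_exp_intOn b t hb).const_mul _
  · filter_upwards with x
    positivity

lemma lap_density_meas (b : ℝ) :
    Measurable fun x : ℝ => ENNReal.ofReal (1 / (2 * b) * Real.exp (-|x| / b)) := by
  apply Measurable.ennreal_ofReal
  fun_prop

open Set Real in
lemma lap_symm (b t : ℝ) : lapMeasure b (Iic t) = lapMeasure b (Ici (-t)) := by
  have hmap : (volume.restrict (Ici (-t))).map Neg.neg = volume.restrict (Iic t) := by
    conv_rhs => rw [← Measure.map_neg_eq_self (volume : Measure ℝ),
      measurableEmbedding_neg.restrict_map]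
    congr 1
    ext x
    simp
  rw [lapMeasure, withDensity_apply _ measurableSet_Iic, withDensity_apply _ measurableSet_Ici,
    ← hmap, lintegral_map (lap_density_meas b) measurable_neg]
  simp [abs_neg]

open Set Real in
lemma lap_Iic (b t : ℝ) (hb : 0 < b) (ht : t ≤ 0) :
    lapMeasure b (Iic t) = ENNReal.ofReal (1 / 2 * Real.exp (t / b)) := by
  rw [lap_symm, lap_Ici b (-t) hb (by linarith), neg_neg]

lemma lap_final_ineq (ε : ℝ) (hε : 0 < ε) :
    ENNReal.ofReal (Real.exp ε) * ENNReal.ofReal (1 / 2 * Real.exp (-(2 * ε))) <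
      ENNReal.ofReal (1 / 2) := by
  rw [← ENNReal.ofReal_mul (Real.exp_pos ε).le]
  apply (ENNReal.ofReal_lt_ofReal_iff (by norm_num)).mpr
  have h1 : Real.exp ε * (1 / 2 * Real.exp (-(2 * ε))) = 1 / 2 * Real.exp (-ε) := by
    rw [mul_left_comm, ← Real.exp_add]
    congr 2
    ring
  rw [h1]
  have h2 : Real.exp (-ε) < 1 := Real.exp_lt_one_iff.mpr (by linarith)
  linarith

/-- The under-calibrated Laplace mechanism with noise scale `Δ/(2ε)` does not satisfy
`ε`-differential privacy when the sensitivity `Δ` is attained: for `|a − a'| = Δ`, there is a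
measurable set `S` with `μ_a(S) > exp(ε) · μ_{a'}(S)`. -/
theorem undercalibrated_laplace_not_dp (Δ ε : ℝ) (hΔ : 0 < Δ) (hε : 0 < ε)
    (a a' : ℝ) (h : |a - a'| = Δ) :
    ∃ S : Set ℝ, MeasurableSet S ∧
      ENNReal.ofReal (Real.exp ε) *
          Measure.map (fun x => x + a') (lapMeasure (Δ / (2 * ε))) S <
        Measure.map (fun x => x + a) (lapMeasure (Δ / (2 * ε))) S := by
  set b := Δ / (2 * ε) with hbdef
  have hb : 0 < b := div_pos hΔ (by linarith)
  have hΔb : Δ / b = 2 * ε := by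
    rw [hbdef]
    field_simp
  rcases (abs_eq hΔ.le).mp h with hc | hc
  · refine ⟨Set.Ici a, measurableSet_Ici, ?_⟩
    rw [Measure.map_apply (measurable_add_const a') measurableSet_Ici,
      Measure.map_apply (measurable_add_const a) measurableSet_Ici,
      Set.preimage_add_const_Ici, Set.preimage_add_const_Ici, hc, sub_self,
      lap_Ici b Δ hb hΔ.le, lap_Ici b 0 hb le_rfl, neg_div, hΔb]
    simpa using lap_final_ineq ε hε
  · refine ⟨Set.Iic a, measurableSet_Iic, ?_⟩
    rw [Measure.map_apply (measurable_add_const a') measurableSet_Iic,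
      Measure.map_apply (measurable_add_const a) measurableSet_Iic,
      Set.preimage_add_const_Iic, Set.preimage_add_const_Iic, hc, sub_self,
      lap_Iic b (-Δ) hb (by linarith), lap_Iic b 0 hb le_rfl, neg_div, hΔb]
    simpa using lap_final_ineq ε hε
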